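/- Let A = ρĀ with Ā symmetric stochastic, 0 < ρ < 1, σ²_gap > 0, β ∈ ℝ. If Σ_x = σ²_gap I + β𝟏𝟏ᵀ (i.e., the off-diagonal variability Σ̄ = 0), then (1/σ²_gap)(R_1 − R_3) = A + (βρ/σ²_gap)𝟏𝟏ᵀ; in particular the error matrix (1/σ²_gap)(R_1 − R_3) − A is a constant multiple of 𝟏𝟏ᵀ (flat). -/

import Mathlib

open Matrix

/-- The all-ones matrix `𝟏𝟏ᵀ`. -/
def onesMat (N : ℕ) : Matrix (Fin N) (Fin N) ℝ := Matrix.of fun _ _ => (1 : ℝ)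

theorem flat_noise_flat_error {N : ℕ}
    (Abar : Matrix (Fin N) (Fin N) ℝ)
    (hnonneg : ∀ i j, 0 ≤ Abar i j)
    (hsymm : Abar.IsSymm)
    (hstoch : ∀ i, ∑ j, Abar i j = 1)
    (ρ : ℝ) (hρ0 : 0 < ρ) (hρ1 : ρ < 1)
    (A : Matrix (Fin N) (Fin N) ℝ) (hA : A = ρ • Abar)
    (σ2gap β : ℝ) (hσ2 : 0 < σ2gap)
    (Sx : Matrix (Fin N) (Fin N) ℝ)
    (hSx : Sx = σ2gap • (1 : Matrix (Fin N) (Fin N) ℝ) + β • onesMat N)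
    (R : ℕ → Matrix (Fin N) (Fin N) ℝ)
    (hR : ∀ k, R k = A ^ k * ∑' i : ℕ, A ^ i * Sx * A ^ i) :
    (1 / σ2gap) • (R 1 - R 3) = A + (β * ρ / σ2gap) • onesMat N ∧
    ∃ c : ℝ, (1 / σ2gap) • (R 1 - R 3) - A = c • onesMat N := by
  set J : Matrix (Fin N) (Fin N) ℝ := onesMat N with hJ
  -- row sums of powers of Abar
  have hrow : ∀ n : ℕ, ∀ i, ∑ j, (Abar ^ n) i j = 1 := by
    intro n
    induction n with
    | zero => intro i; simp [Matrix.one_apply]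
    | succ n ih =>
      intro i
      rw [pow_succ]
      simp only [Matrix.mul_apply]
      rw [Finset.sum_comm]
      calc ∑ k, ∑ j, (Abar ^ n) i k * Abar k j
          = ∑ k, (Abar ^ n) i k * ∑ j, Abar k j := by
            simp [Finset.mul_sum]
        _ = 1 := by simp [hstoch, ih]
  have hnonnegpow : ∀ n : ℕ, ∀ i j, 0 ≤ (Abar ^ n) i j := by
    intro n
    induction n with
    | zero =>
      intro i j
      rw [pow_zero, Matrix.one_apply]
      split <;> norm_num
    | succ n ih =>
      intro i j
      rw [pow_succ, Matrix.mul_apply]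
      exact Finset.sum_nonneg fun k _ => mul_nonneg (ih i k) (hnonneg k j)
  have hle : ∀ n : ℕ, ∀ i j, (Abar ^ n) i j ≤ 1 := by
    intro n i j
    calc (Abar ^ n) i j ≤ ∑ k, (Abar ^ n) i k :=
          Finset.single_le_sum (fun k _ => hnonnegpow n i k) (Finset.mem_univ j)
      _ = 1 := hrow n i
  have hApow : ∀ n : ℕ, A ^ n = ρ ^ n • Abar ^ n := by
    intro n; rw [hA, smul_pow]
  have hρpow : ∀ n : ℕ, (0:ℝ) ≤ ρ ^ n := fun n => pow_nonneg hρ0.le n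
  have hAbound : ∀ n : ℕ, ∀ i j, |(A ^ n) i j| ≤ ρ ^ n := by
    intro n i j
    rw [hApow n]
    rw [Matrix.smul_apply, smul_eq_mul, abs_mul, abs_of_nonneg (hρpow n),
      abs_of_nonneg (hnonnegpow n i j)]
    nlinarith [hle n i j, hρpow n]
  -- A^n * J = ρ^n • J
  have hAJ : ∀ n : ℕ, A ^ n * J = (ρ ^ n) • J := by
    intro n
    ext i j
    rw [Matrix.mul_apply]
    have : ∀ k : Fin N, J k j = 1 := fun k => rfl
    simp only [this, mul_one]
    rw [hApow n]
    simp only [Matrix.smul_apply, smul_eq_mul, ← Finset.mul_sum, hrow n i]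
    simp [hJ, onesMat]
  -- J * A^n = ρ^n • J  (uses symmetry for column sums)
  have hsympow : ∀ n : ℕ, (Abar ^ n)ᵀ = Abar ^ n := by
    intro n; rw [Matrix.transpose_pow, hsymm.eq]
  have hcol : ∀ n : ℕ, ∀ j, ∑ i, (Abar ^ n) i j = 1 := by
    intro n j
    have : ∀ i, (Abar ^ n) i j = (Abar ^ n) j i := by
      intro i
      conv_lhs => rw [← hsympow n]
      rfl
    simp only [this]
    exact hrow n j
  have hJA : ∀ n : ℕ, J * A ^ n = (ρ ^ n) • J := by
    intro n
    ext i j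
    rw [Matrix.mul_apply]
    have : ∀ k : Fin N, J i k = 1 := fun k => rfl
    simp only [this, one_mul]
    rw [hApow n]
    simp only [Matrix.smul_apply, smul_eq_mul, ← Finset.mul_sum, hcol n j]
    simp [hJ, onesMat]
  -- decomposition of the summand
  have hAiAi : ∀ i : ℕ, A ^ i * A ^ i = (A ^ 2) ^ i := by
    intro i
    rw [← pow_add, ← pow_mul, two_mul]
  have hf : ∀ i : ℕ, A ^ i * Sx * A ^ i
      = σ2gap • (A ^ 2) ^ i + (β * (ρ ^ 2) ^ i) • J := by
    intro i
    rw [hSx]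
    rw [Matrix.mul_add, Matrix.add_mul]
    congr 1
    · rw [Matrix.mul_smul, Matrix.mul_one, Matrix.smul_mul, hAiAi]
    · rw [Matrix.mul_smul, Matrix.smul_mul, hAJ i, Matrix.smul_mul, hJA i, smul_smul, smul_smul]
      congr 1
      rw [← pow_mul, two_mul, pow_add]
      ring
  -- summability facts
  have hρ2nonneg : (0:ℝ) ≤ ρ ^ 2 := hρpow 2
  have hρ2lt : ρ ^ 2 < 1 := by nlinarith
  have hgeo : Summable fun n : ℕ => (ρ ^ 2) ^ n :=
    summable_geometric_of_lt_one hρ2nonneg hρ2lt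
  have hsumg : Summable fun n : ℕ => (A ^ 2) ^ n := by
    refine Pi.summable.mpr ?_
    intro i
    rw [Pi.summable]
    intro j
    apply Summable.of_abs
    apply Summable.of_nonneg_of_le (fun n => abs_nonneg _) _ hgeo
    intro n
    have := hAbound (2 * n) i j
    rw [pow_mul, pow_mul] at this
    exact this
  set T : Matrix (Fin N) (Fin N) ℝ := ∑' n : ℕ, (A ^ 2) ^ n with hT
  -- the tsum
  have h1 : HasSum (fun n : ℕ => σ2gap • (A ^ 2) ^ n) (σ2gap • T) :=
    hsumg.hasSum.const_smul σ2gap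
  have h2 : HasSum (fun n : ℕ => β * (ρ ^ 2) ^ n) (β * (1 - ρ ^ 2)⁻¹) :=
    (hasSum_geometric_of_lt_one hρ2nonneg hρ2lt).mul_left β
  have h2' : HasSum (fun n : ℕ => (β * (ρ ^ 2) ^ n) • J) ((β * (1 - ρ ^ 2)⁻¹) • J) :=
    h2.smul_const J
  have hS : HasSum (fun i : ℕ => A ^ i * Sx * A ^ i)
      (σ2gap • T + (β * (1 - ρ ^ 2)⁻¹) • J) := by
    have := h1.add h2'
    simpa [hf] using this
  have hStsum : ∑' i : ℕ, A ^ i * Sx * A ^ i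
      = σ2gap • T + (β * (1 - ρ ^ 2)⁻¹) • J := hS.tsum_eq
  -- geometric series identity (1 - A^2) * T = 1
  have hpow0 : Filter.Tendsto (fun n : ℕ => (A ^ 2) ^ n) Filter.atTop (nhds 0) := by
    refine tendsto_pi_nhds.mpr ?_
    intro i
    rw [tendsto_pi_nhds]
    intro j
    have hb : Filter.Tendsto (fun n : ℕ => (ρ ^ 2) ^ n) Filter.atTop (nhds 0) :=
      tendsto_pow_atTop_nhds_zero_of_lt_one hρ2nonneg hρ2lt
    apply squeeze_zero_norm _ hb
    intro n
    have := hAbound (2 * n) i j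
    rw [pow_mul, pow_mul] at this
    simpa using this
  have hinv : (1 - A ^ 2) * T = 1 := by
    have hten : Filter.Tendsto (fun n : ℕ => ∑ i ∈ Finset.range n, (A ^ 2) ^ i)
        Filter.atTop (nhds T) := hsumg.hasSum.tendsto_sum_nat
    have hmul : Filter.Tendsto
        (fun n : ℕ => (1 - A ^ 2) * ∑ i ∈ Finset.range n, (A ^ 2) ^ i)
        Filter.atTop (nhds ((1 - A ^ 2) * T)) := hten.const_mul _
    have heq : ∀ n : ℕ, (1 - A ^ 2) * ∑ i ∈ Finset.range n, (A ^ 2) ^ i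
        = 1 - (A ^ 2) ^ n := by
      intro n
      have := mul_geom_sum (A ^ 2) n
      calc (1 - A ^ 2) * ∑ i ∈ Finset.range n, (A ^ 2) ^ i
          = -((A ^ 2 - 1) * ∑ i ∈ Finset.range n, (A ^ 2) ^ i) := by
            rw [← neg_sub, neg_mul]
        _ = -((A ^ 2) ^ n - 1) := by rw [this]
        _ = 1 - (A ^ 2) ^ n := neg_sub _ _
    have hmul2 : Filter.Tendsto
        (fun n : ℕ => (1 - A ^ 2) * ∑ i ∈ Finset.range n, (A ^ 2) ^ i)
        Filter.atTop (nhds (1 : Matrix (Fin N) (Fin N) ℝ)) := by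
      simp only [heq]
      have : Filter.Tendsto (fun n : ℕ => (1 : Matrix (Fin N) (Fin N) ℝ) - (A ^ 2) ^ n)
          Filter.atTop (nhds (1 - 0)) := Filter.Tendsto.sub tendsto_const_nhds hpow0
      simpa using this
    exact tendsto_nhds_unique hmul hmul2
  -- main computation
  have hρ2ne : (1 : ℝ) - ρ ^ 2 ≠ 0 := by nlinarith
  have hmain : R 1 - R 3 = σ2gap • A + (β * ρ) • J := by
    rw [hR 1, hR 3, ← Matrix.sub_mul, hStsum]
    rw [Matrix.mul_add, Matrix.mul_smul, Matrix.mul_smul]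
    have hAT : (A ^ 1 - A ^ 3) * T = A := by
      have hfac : A ^ 1 - A ^ 3 = A * (1 - A ^ 2) := by
        rw [mul_sub, mul_one, pow_one]
        congr 1
        rw [pow_succ, pow_two, mul_assoc]
      rw [hfac, mul_assoc, hinv, mul_one]
    have hAJ' : (A ^ 1 - A ^ 3) * J = (ρ ^ 1 - ρ ^ 3) • J := by
      rw [Matrix.sub_mul, hAJ 1, hAJ 3, sub_smul]
    rw [hAT, hAJ', smul_smul]
    congr 1
    have : β * (1 - ρ ^ 2)⁻¹ * (ρ ^ 1 - ρ ^ 3) = β * ρ := by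
      field_simp
    rw [this]
  have hσne : σ2gap ≠ 0 := ne_of_gt hσ2
  have hfirst : (1 / σ2gap) • (R 1 - R 3) = A + (β * ρ / σ2gap) • J := by
    rw [hmain, smul_add, smul_smul, smul_smul]
    congr 1
    · rw [div_mul_cancel₀] <;> simp [hσne, one_div, inv_mul_cancel₀ hσne]
    · congr 1
      field_simp
  refine ⟨hfirst, ⟨β * ρ / σ2gap, ?_⟩⟩
  rw [hfirst]
  abel
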